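/- (Proposition 3.2) Let x_1, …, x_n ∈ ℝ^d, let f ∈ ℝ^n be a fault vector whose support has cardinality m, let D ∈ ℝ^{n×n} be the faulty Euclidean distance matrix with entries D_{ij} = (‖x_i − x_j‖ + f_i + f_j)² for i ≠ j and D_{ii} = 0, let J = I_n − (1/n) 𝟙 𝟙ᵀ, and let G = −(1/2) J D J be the geometric-centered EDM. Then rank(G) ≤ min(d + 2m, n − 1). -/

import Mathlib

open Matrix

private lemma matrix_rank_add_le {n : ℕ} (A B : Matrix (Fin n) (Fin n) ℝ) :
    (A + B).rank ≤ A.rank + B.rank := by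
  have hle : LinearMap.range (A + B).mulVecLin ≤
      LinearMap.range A.mulVecLin ⊔ LinearMap.range B.mulVecLin := by
    rw [Matrix.mulVecLin_add]
    rintro _ ⟨v, rfl⟩
    exact Submodule.add_mem_sup (LinearMap.mem_range_self _ v) (LinearMap.mem_range_self _ v)
  exact (Submodule.finrank_mono hle).trans
    (Submodule.finrank_add_le_finrank_add_finrank _ _)

private lemma rank_le_of_rows_subset {n : ℕ} (S : Finset (Fin n)) (A : Matrix (Fin n) (Fin n) ℝ)
    (h : ∀ i ∉ S, ∀ j, A i j = 0) : A.rank ≤ S.card := by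
  classical
  set P : Matrix (Fin n) S ℝ := fun i s => if i = (s : Fin n) then (1:ℝ) else 0 with hP
  set Q : Matrix S (Fin n) ℝ := fun s j => A s j with hQ
  have hA : A = P * Q := by
    ext i j
    rw [Matrix.mul_apply]
    by_cases hi : i ∈ S
    · rw [Fintype.sum_eq_single (⟨i, hi⟩ : S)]
      · simp [hP, hQ]
      · intro s hs
        have : i ≠ (s : Fin n) := fun hc => hs (Subtype.ext hc.symm)
        simp [hP, this]
    · rw [h i hi j]
      refine (Finset.sum_eq_zero ?_).symm
      intro s _
      have : i ≠ (s : Fin n) := fun hc => hi (hc ▸ s.2)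
      simp [hP, this]
  calc A.rank ≤ Q.rank := by rw [hA]; exact Matrix.rank_mul_le_right _ _
    _ ≤ Fintype.card S := Matrix.rank_le_card_height _
    _ = S.card := Fintype.card_coe S

/-- Proposition 3.2: the geometric-centered faulty EDM `G = −(1/2) J D J`,
where `D` is the faulty EDM of `n` points in `ℝ^d` with `m` fault satellites,
has rank at most `min (d + 2m) (n − 1)`. -/
theorem gcedm_rank_le
    {n d : ℕ} (x : Fin n → EuclideanSpace ℝ (Fin d))
    (f : Fin n → ℝ) (m : ℕ)
    (hm : (Function.support f).ncard = m)
    (D : Matrix (Fin n) (Fin n) ℝ)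
    (hD : ∀ i j, D i j = if i = j then 0 else (‖x i - x j‖ + f i + f j) ^ 2)
    (J : Matrix (Fin n) (Fin n) ℝ)
    (hJ : J = 1 - ((n : ℝ)⁻¹) • vecMulVec (1 : Fin n → ℝ) (1 : Fin n → ℝ))
    (G : Matrix (Fin n) (Fin n) ℝ)
    (hG : G = (-(1/2) : ℝ) • (J * D * J)) :
    G.rank ≤ min (d + 2 * m) (n - 1) := by
  classical
  rcases Nat.eq_zero_or_pos n with hn | hn
  · subst hn
    have h0 : G.rank ≤ 0 := by simpa using G.rank_le_card_height
    exact h0.trans (Nat.zero_le _)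
  have hn0 : (n : ℝ) ≠ 0 := Nat.cast_ne_zero.mpr hn.ne'
  -- row and column sums of J vanish
  have hrow : ∀ i, ∑ j, J i j = 0 := by
    intro i
    simp [hJ, Matrix.sub_apply, Matrix.one_apply, vecMulVec_apply,
      Finset.sum_sub_distrib, Finset.sum_ite_eq, Finset.card_univ]
    field_simp
    norm_num
  have hcol : ∀ j, ∑ i, J i j = 0 := by
    intro j
    simp [hJ, Matrix.sub_apply, Matrix.one_apply, vecMulVec_apply,
      Finset.sum_sub_distrib, Finset.sum_ite_eq', Finset.card_univ]
    field_simp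
    norm_num
  -- norms via coordinates
  have hnorm2 : ∀ a : EuclideanSpace ℝ (Fin d), ‖a‖ ^ 2 = ∑ k, a k ^ 2 := by
    intro a
    rw [← real_inner_self_eq_norm_sq, PiLp.inner_apply]
    simp [pow_two]
  have hnormsub : ∀ a b : EuclideanSpace ℝ (Fin d),
      ‖a - b‖ ^ 2 = ∑ k, a k ^ 2 + ∑ k, b k ^ 2 - 2 * ∑ k, a k * b k := by
    intro a b
    rw [norm_sub_sq_real, hnorm2, hnorm2, PiLp.inner_apply]
    simp [RCLike.inner_apply]
    rw [Finset.sum_congr rfl fun k _ => mul_comm (b.ofLp k) (a.ofLp k)]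
    ring
  -- the decomposition  D = u 1ᵀ + 1 uᵀ + (X + R + C)
  set Y : Matrix (Fin n) (Fin d) ℝ := fun i k => x i k with hY
  set X : Matrix (Fin n) (Fin n) ℝ := ((-2 : ℝ) • Y) * Yᵀ with hX
  set R : Matrix (Fin n) (Fin n) ℝ :=
    fun i j => 2 * ‖x i - x j‖ * f i + f i * f j - (if i = j then 2 * f i ^ 2 else 0) with hR
  set C : Matrix (Fin n) (Fin n) ℝ :=
    fun i j => 2 * ‖x i - x j‖ * f j + f i * f j - (if i = j then 2 * f j ^ 2 else 0) with hC
  set u : Fin n → ℝ := fun i => ‖x i‖ ^ 2 + f i ^ 2 with hu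
  have hXapp : ∀ i j, X i j = -2 * ∑ k, x i k * x j k := by
    intro i j
    rw [hX, Matrix.mul_apply]
    rw [Finset.mul_sum]
    refine Finset.sum_congr rfl fun k _ => ?_
    rw [Matrix.smul_apply, Matrix.transpose_apply]
    simp [hY, Matrix.smul_apply, Matrix.transpose_apply, Pi.smul_apply]
    ring
  have hdec : D = vecMulVec u 1 + vecMulVec 1 u + (X + R + C) := by
    ext i j
    simp only [Matrix.add_apply]
    simp only [Matrix.add_apply, vecMulVec_apply, Pi.one_apply, hD i j, hXapp i j, hR, hC, hu,
      hnorm2, Pi.add_apply]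
    by_cases hij : i = j
    · subst hij
      simp only [if_true, sub_self, norm_zero, mul_zero, zero_mul]
      have hs : ∑ k, x i k * x i k = ∑ k, x i k ^ 2 :=
        Finset.sum_congr rfl (fun k _ => (pow_two _).symm)
      rw [hs]; ring
    · simp only [hij, if_false]
      have hN := hnormsub (x i) (x j)
      nlinarith [hN]
  -- J kills the rank-one border terms
  have hkill1 : vecMulVec u 1 * J = 0 := by
    ext i j
    rw [Matrix.mul_apply]
    simp only [vecMulVec_apply, Pi.one_apply, mul_one, Matrix.zero_apply]
    rw [← Finset.mul_sum, hcol j, mul_zero]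
  have hkill2 : J * vecMulVec 1 u = 0 := by
    ext i j
    rw [Matrix.mul_apply]
    simp only [vecMulVec_apply, Pi.one_apply, one_mul, Matrix.zero_apply]
    rw [← Finset.sum_mul, hrow i, zero_mul]
  have hJDJ : J * D * J = J * (X + R + C) * J := by
    rw [hdec]
    rw [Matrix.mul_add, Matrix.mul_add, Matrix.add_mul, Matrix.add_mul]
    rw [mul_assoc J (vecMulVec u 1) J, hkill1, mul_zero, hkill2, Matrix.zero_mul]
    simp
  -- bound 1 : rank G ≤ n - 1
  have hJ1 : J *ᵥ (1 : Fin n → ℝ) = 0 := by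
    ext i
    simpa [Matrix.mulVec, dotProduct] using hrow i
  have hrankJ : J.rank ≤ n - 1 := by
    have hrn := LinearMap.finrank_range_add_finrank_ker J.mulVecLin
    have hfin : Module.finrank ℝ (Fin n → ℝ) = n := by simp
    have hker : 0 < Module.finrank ℝ (LinearMap.ker J.mulVecLin) := by
      rw [Module.finrank_pos_iff]
      refine ⟨⟨(1 : Fin n → ℝ), by simpa [Matrix.mulVecLin] using hJ1⟩, 0, ?_⟩
      intro hc
      have : (1 : Fin n → ℝ) = 0 := congrArg Subtype.val hc
      have h1 : (1 : ℝ) = 0 := congrFun this ⟨0, hn⟩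
      norm_num at h1
    rw [hfin] at hrn
    have : J.rank + 1 ≤ n := by
      rw [Matrix.rank]
      omega
    omega
  have hb1 : G.rank ≤ n - 1 := by
    have hGf : G = ((-(1/2) : ℝ) • (J * D)) * J := by
      rw [hG, smul_mul_assoc]
    calc G.rank ≤ J.rank := by rw [hGf]; exact Matrix.rank_mul_le_right _ _
      _ ≤ n - 1 := hrankJ
  -- bound 2 : rank G ≤ d + 2m
  set S : Finset (Fin n) := Finset.univ.filter (fun i => f i ≠ 0) with hS
  have hSm : S.card = m := by
    rw [← hm]
    have : Function.support f = ↑S := by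
      ext i; simp [hS, Function.mem_support]
    rw [this, Set.ncard_coe_finset]
  have hrX : X.rank ≤ d := by
    calc X.rank ≤ Yᵀ.rank := Matrix.rank_mul_le_right _ _
      _ ≤ Fintype.card (Fin d) := Matrix.rank_le_card_height _
      _ = d := Fintype.card_fin d
  have hrR : R.rank ≤ m := by
    rw [← hSm]
    refine rank_le_of_rows_subset S R (fun i hi j => ?_)
    have hfi : f i = 0 := by
      by_contra hfi
      exact hi (by simp [hS, hfi])
    simp [hR, hfi]
  have hrC : C.rank ≤ m := by
    rw [← hSm, ← Matrix.rank_transpose C]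
    refine rank_le_of_rows_subset S Cᵀ (fun i hi j => ?_)
    have hfi : f i = 0 := by
      by_contra hfi
      exact hi (by simp [hS, hfi])
    simp [Matrix.transpose, hC, hfi]
  have hb2 : G.rank ≤ d + 2 * m := by
    have hGf : G = (((-(1/2) : ℝ) • J) * ((X + R + C) * J)) := by
      rw [hG, hJDJ, mul_assoc, ← smul_mul_assoc]
    have h1 : G.rank ≤ (X + R + C).rank := by
      calc G.rank ≤ ((X + R + C) * J).rank := by
            rw [hGf]; exact Matrix.rank_mul_le_right _ _
        _ ≤ (X + R + C).rank := Matrix.rank_mul_le_left _ _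
    have h2 : (X + R + C).rank ≤ X.rank + R.rank + C.rank := by
      calc (X + R + C).rank ≤ (X + R).rank + C.rank := matrix_rank_add_le _ _
        _ ≤ X.rank + R.rank + C.rank := by
            exact Nat.add_le_add_right (matrix_rank_add_le _ _) _
    omega
  exact le_min hb2 hb1
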